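/- arXiv:1504.07100 — 2 statements merged into one kernel-verified Lean document; each statement's English description precedes it below -/
import Mathlib

section
/- Let A : ℝ → M₂(ℂ) be continuous and let y : ℝ → M₂(ℂ) satisfy y(0) = 1 and y′(t) = y(t)·A(t) for all t ∈ [0,1]. Then the ordered products P_n = (1 + n⁻¹A(0))·(1 + n⁻¹A(1/n))·…·(1 + n⁻¹A((n−1)/n)), with factors at earlier times on the left, converge to y(1) as n → ∞. -/
attribute [local instance] Matrix.normedAddCommGroup Matrix.normedSpace

private lemma mat_norm_mul_le (a b : Matrix (Fin 2) (Fin 2) ℂ) :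
    ‖a * b‖ ≤ 2 * ‖a‖ * ‖b‖ := by
  rw [Matrix.norm_le_iff (by positivity)]
  intro i j
  calc ‖(a*b) i j‖ = ‖∑ k, a i k * b k j‖ := by rw [Matrix.mul_apply]
    _ ≤ ∑ k, ‖a i k * b k j‖ := norm_sum_le _ _
    _ ≤ ∑ _k : Fin 2, ‖a‖ * ‖b‖ := by
        refine Finset.sum_le_sum fun k _ => ?_
        rw [norm_mul]
        exact mul_le_mul (Matrix.norm_entry_le_entrywise_sup_norm a)
          (Matrix.norm_entry_le_entrywise_sup_norm b) (norm_nonneg _) (norm_nonneg _)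
    _ = 2 * ‖a‖ * ‖b‖ := by simp [Finset.sum_const]; ring

set_option maxHeartbeats 1600000 in
/-- the parallel transport `y(1)` of a continuous `M₂(ℂ)`-valued
one-form `A` along `[0,1]` is the limit of the ordered products
`(1 + n⁻¹A(0))·(1 + n⁻¹A(1/n))·…·(1 + n⁻¹A((n−1)/n))`. -/
theorem holonomy_eq_limit_of_ordered_products
    (A : ℝ → Matrix (Fin 2) (Fin 2) ℂ) (hA : Continuous A)
    (y : ℝ → Matrix (Fin 2) (Fin 2) ℂ) (hy0 : y 0 = 1)
    (hy : ∀ t ∈ Set.Icc (0 : ℝ) 1, HasDerivAt y (y t * A t) t) :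
    Filter.Tendsto
      (fun n : ℕ =>
        (((List.range n).map
          (fun i => (1 : Matrix (Fin 2) (Fin 2) ℂ) + (n : ℝ)⁻¹ • A (i / n))).prod))
      Filter.atTop (nhds (y 1)) := by
  have hyc : ContinuousOn y (Set.Icc 0 1) :=
    fun t ht => ((hy t ht).continuousAt).continuousWithinAt
  set f : ℝ → Matrix (Fin 2) (Fin 2) ℂ := fun s => y s * A s with hf_def
  have hfc : ContinuousOn f (Set.Icc 0 1) := hyc.mul hA.continuousOn
  obtain ⟨M, hM⟩ := (isCompact_Icc : IsCompact (Set.Icc (0:ℝ) 1)).exists_bound_of_continuousOn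
    hA.continuousOn
  have hM0 : 0 ≤ M := le_trans (norm_nonneg _) (hM 0 (by norm_num))
  -- FTC
  have ftc : ∀ a b : ℝ, a ∈ Set.Icc (0:ℝ) 1 → b ∈ Set.Icc (0:ℝ) 1 → a ≤ b →
      (∫ s in a..b, f s) = y b - y a := by
    intro a b ha hb hab
    have hsub : Set.uIcc a b ⊆ Set.Icc (0:ℝ) 1 := by
      rw [Set.uIcc_of_le hab]; exact Set.Icc_subset_Icc ha.1 hb.2
    refine intervalIntegral.integral_eq_sub_of_hasDerivAt ?_ ?_
    · intro t ht
      exact hy t (hsub ht)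
    · exact (hfc.mono hsub).intervalIntegrable
  -- uniform continuity of f on [0,1]
  have hfu : UniformContinuousOn f (Set.Icc 0 1) :=
    isCompact_Icc.uniformContinuousOn_of_continuous hfc
  refine Metric.tendsto_atTop.2 ?_
  intro ε' hε'
  set ε : ℝ := ε' / (2 * Real.exp (2*M)) with hεdef
  have hε : 0 < ε := by positivity
  obtain ⟨δ, hδ, hδε⟩ := (Metric.uniformContinuousOn_iff).1 hfu ε hε
  obtain ⟨N, hN⟩ := exists_nat_gt (max 1 (1/δ))
  refine ⟨N, fun n hn => ?_⟩
  have hN1 : (1:ℝ) < N := lt_of_le_of_lt (le_max_left _ _) hN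
  have hN1' : 1 ≤ N := by exact_mod_cast hN1.le
  have hn1 : 1 ≤ n := le_trans hN1' hn
  have hnpos : (0:ℝ) < n := by positivity
  set h : ℝ := (n:ℝ)⁻¹ with hhdef
  have hh : 0 < h := by positivity
  have hhδ : h < δ := by
    have h1 : 1/δ < (N:ℝ) := lt_of_le_of_lt (le_max_right _ _) hN
    have hNn : (N:ℝ) ≤ n := by exact_mod_cast hn
    have : 1/δ < (n:ℝ) := lt_of_lt_of_le h1 hNn
    rw [div_lt_iff₀ hδ] at this
    rw [hhdef, inv_lt_iff_one_lt_mul₀ hnpos]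
    linarith [mul_comm δ (n:ℝ) ▸ this]
  set B : ℝ := 1 + 2 * h * M with hBdef
  have hB1 : 1 ≤ B := by nlinarith [hh.le, hM0]
  have hB0 : 0 ≤ B := le_trans zero_le_one hB1
  set P : ℕ → Matrix (Fin 2) (Fin 2) ℂ :=
    fun k => ((List.range k).map
      (fun i => (1 : Matrix (Fin 2) (Fin 2) ℂ) + (n : ℝ)⁻¹ • A (i / n))).prod with hPdef
  -- main discrete Gronwall estimate
  have key : ∀ k, k ≤ n → ‖y ((k:ℝ)/n) - P k‖ ≤ k * (h * ε) * B ^ k := by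
    intro k
    induction k with
    | zero => intro _; simp [hPdef, hy0]
    | succ k ih =>
      intro hk
      have hkn : k ≤ n := le_of_lt (Nat.lt_of_succ_le hk)
      have ihk := ih hkn
      have hkr : (k:ℝ) ≤ n := by exact_mod_cast hkn
      have hk1r : ((k:ℝ)+1) ≤ n := by exact_mod_cast hk
      set tk : ℝ := (k:ℝ)/n with htk
      set tk1 : ℝ := ((k+1:ℕ):ℝ)/n with htk1
      have htkmem : tk ∈ Set.Icc (0:ℝ) 1 := by
        constructor
        · positivity
        · rw [div_le_one hnpos]; exact hkr
      have htk1mem : tk1 ∈ Set.Icc (0:ℝ) 1 := by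
        constructor
        · positivity
        · rw [div_le_one hnpos]; push_cast; exact hk1r
      have hstep : tk1 - tk = h := by
        rw [htk1, htk, hhdef]; push_cast; field_simp; ring
      have hle : tk ≤ tk1 := by linarith [hstep, hh.le]
      have hsub : Set.uIcc tk tk1 ⊆ Set.Icc (0:ℝ) 1 := by
        rw [Set.uIcc_of_le hle]; exact Set.Icc_subset_Icc htkmem.1 htk1mem.2
      -- local truncation error
      have hτ : ‖y tk1 - y tk - h • f tk‖ ≤ h * ε := by
        have h1 : y tk1 - y tk = ∫ s in tk..tk1, f s := (ftc tk tk1 htkmem htk1mem hle).symm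
        have h2 : h • f tk = ∫ _s in tk..tk1, f tk := by
          rw [intervalIntegral.integral_const, hstep]
        rw [h1, h2, ← intervalIntegral.integral_sub ((hfc.mono hsub).intervalIntegrable)
          intervalIntegrable_const]
        have hb := intervalIntegral.norm_integral_le_of_norm_le_const (C := ε)
          (a := tk) (b := tk1) (f := fun s => f s - f tk) ?_
        · calc ‖∫ s in tk..tk1, (f s - f tk)‖ ≤ ε * |tk1 - tk| := hb
            _ = h * ε := by rw [hstep, abs_of_nonneg hh.le]; ring
        · intro s hs
          rw [Set.uIoc_of_le hle] at hs
          have hsmem : s ∈ Set.Icc (0:ℝ) 1 :=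
            ⟨le_trans htkmem.1 hs.1.le, le_trans hs.2 htk1mem.2⟩
          have hdist : dist s tk < δ := by
            rw [Real.dist_eq, abs_of_nonneg (by linarith [hs.1.le])]
            linarith [hs.2, hstep, hhδ]
          have := hδε s hsmem tk htkmem hdist
          rw [dist_eq_norm] at this
          exact this.le
      -- recursion for P
      have hP : P (k+1) = P k + h • (P k * A tk) := by
        have : P (k+1) = P k * (1 + h • A tk) := by
          simp [hPdef, List.range_succ, htk, hhdef]
        rw [this, mul_add, mul_one, mul_smul_comm]
      have key_eq : y tk1 - P (k+1) =
          (y tk1 - y tk - h • (y tk * A tk)) +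
            ((y tk - P k) + h • ((y tk - P k) * A tk)) := by
        rw [hP, sub_mul, smul_sub]; abel
      have hAk : ‖A tk‖ ≤ M := hM tk htkmem
      have hmul : ‖(y tk - P k) * A tk‖ ≤ 2 * ‖y tk - P k‖ * M :=
        le_trans (mat_norm_mul_le _ _) (by gcongr)
      have hnorm : ‖y tk1 - P (k+1)‖ ≤ h * ε + ‖y tk - P k‖ * B := by
        rw [key_eq]
        refine le_trans (norm_add_le _ _) ?_
        have h2 : ‖(y tk - P k) + h • ((y tk - P k) * A tk)‖ ≤ ‖y tk - P k‖ * B := by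
          refine le_trans (norm_add_le _ _) ?_
          rw [norm_smul, Real.norm_eq_abs, abs_of_nonneg hh.le, hBdef]
          nlinarith [mul_le_mul_of_nonneg_left hmul hh.le]
        linarith [hτ, h2]
      have hBk1 : 1 ≤ B ^ (k+1) := one_le_pow₀ hB1
      calc ‖y (((k+1:ℕ):ℝ)/n) - P (k+1)‖ ≤ h * ε + ‖y tk - P k‖ * B := hnorm
        _ ≤ h * ε + (k * (h * ε) * B ^ k) * B :=
            by gcongr
        _ = h * ε + k * (h * ε) * B ^ (k+1) := by ring
        _ ≤ ((k:ℝ)+1) * (h * ε) * B ^ (k+1) := by nlinarith [hh.le, hε.le, mul_nonneg hh.le hε.le]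
        _ = ((k+1:ℕ):ℝ) * (h * ε) * B ^ (k+1) := by push_cast; ring
  -- conclude
  have hfin := key n le_rfl
  have hnn : ((n:ℝ))/n = 1 := div_self (ne_of_gt hnpos)
  rw [hnn] at hfin
  have hnh : (n:ℝ) * h = 1 := mul_inv_cancel₀ (ne_of_gt hnpos)
  have hBexp : B ^ n ≤ Real.exp (2*M) := by
    have h1 : B ≤ Real.exp (2 * h * M) := by
      rw [hBdef]; rw [add_comm]; exact Real.add_one_le_exp _
    calc B ^ n ≤ (Real.exp (2 * h * M)) ^ n := pow_le_pow_left₀ hB0 h1 n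
      _ = Real.exp ((n:ℝ) * (2 * h * M)) := by rw [← Real.exp_nat_mul]
      _ = Real.exp (2*M) := by
          congr 1
          calc (n:ℝ) * (2 * h * M) = 2 * M * ((n:ℝ) * h) := by ring
            _ = 2 * M := by rw [hnh, mul_one]
  have hbound : ‖y 1 - P n‖ ≤ ε * Real.exp (2*M) := by
    calc ‖y 1 - P n‖ ≤ n * (h * ε) * B ^ n := hfin
      _ = ((n:ℝ) * h) * ε * B ^ n := by ring
      _ = ε * B ^ n := by rw [hnh, one_mul]
      _ ≤ ε * Real.exp (2*M) := by gcongr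
  have hhalf : ε * Real.exp (2*M) = ε' / 2 := by
    rw [hεdef]
    field_simp
  rw [dist_eq_norm, norm_sub_rev]
  calc ‖y 1 - P n‖ ≤ ε' / 2 := hhalf ▸ hbound
    _ < ε' := by linarith
end

section
/- Let A, W : ℝ → M₂(ℂ) be continuous. For each s ∈ ℝ let y_s : ℝ → M₂(ℂ) be the solution of y_s′(t) = y_s(t)·(A(t) + s·W(t)) on [0,1] with y_s(0) = 1. Then y₀(x) is invertible for every x ∈ [0,1], the map s ↦ y_s(1) is differentiable at s = 0, and its derivative equals (∫₀¹ y₀(x)·W(x)·y₀(x)⁻¹ dx)·y₀(1). -/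
attribute [local instance] Matrix.normedAddCommGroup Matrix.normedSpace

local notation "E" => Matrix (Fin 2) (Fin 2) ℂ

private lemma hasDerivAt_entry {f : ℝ → E} {f' : E} {t : ℝ} (h : HasDerivAt f f' t)
    (i j : Fin 2) :
    HasDerivAt (fun t => f t i j) (f' i j) t := hasDerivAt_pi.1 (hasDerivAt_pi.1 h i) j

private lemma hasDerivAt_of_entries {f : ℝ → E} {f' : E} {t : ℝ}
    (h : ∀ i j, HasDerivAt (fun t => f t i j) (f' i j) t) :
    HasDerivAt f f' t := hasDerivAt_pi.2 fun i => hasDerivAt_pi.2 fun j => h i j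

private lemma norm_matMul_le (a b : E) : ‖a * b‖ ≤ 2 * ‖a‖ * ‖b‖ := by
  rw [Matrix.norm_le_iff (by positivity)]
  intro i j
  rw [Matrix.mul_apply, Fin.sum_univ_two]
  calc ‖a i 0 * b 0 j + a i 1 * b 1 j‖ ≤ ‖a i 0 * b 0 j‖ + ‖a i 1 * b 1 j‖ := norm_add_le _ _
  _ ≤ ‖a‖ * ‖b‖ + ‖a‖ * ‖b‖ := by
      rw [norm_mul, norm_mul]
      gcongr <;> exact Matrix.norm_entry_le_entrywise_sup_norm _
  _ = 2 * ‖a‖ * ‖b‖ := by ring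

private lemma HasDerivAt.matMul {f g : ℝ → E} {f' g' : E} {t : ℝ}
    (hf : HasDerivAt f f' t) (hg : HasDerivAt g g' t) :
    HasDerivAt (fun t => f t * g t) (f' * g t + f t * g') t := by
  apply hasDerivAt_of_entries
  intro i j
  have : ∀ x : ℝ, (f x * g x) i j = f x i 0 * g x 0 j + f x i 1 * g x 1 j := by
    intro x; rw [Matrix.mul_apply, Fin.sum_univ_two]
  simp only [this]
  have h1 := ((hasDerivAt_entry hf i 0).mul (hasDerivAt_entry hg 0 j)).add
    ((hasDerivAt_entry hf i 1).mul (hasDerivAt_entry hg 1 j))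
  convert h1 using 1
  · rfl
  · rfl
  simp [Matrix.add_apply, Matrix.mul_apply, Fin.sum_univ_two]
  ring

private lemma ContinuousOn.matMul {f g : ℝ → E} {s : Set ℝ}
    (hf : ContinuousOn f s) (hg : ContinuousOn g s) :
    ContinuousOn (fun t => f t * g t) s := by
  have hm : Continuous (fun p : E × E => p.1 * p.2) :=
    Continuous.matrix_mul continuous_fst continuous_snd
  exact hf.mul hg

private lemma hasDerivAt_det' {u : ℝ → E} {B : E} {t : ℝ} (h : HasDerivAt u (u t * B) t) :
    HasDerivAt (fun t => (u t).det) ((u t).det * B.trace) t := by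
  have e : ∀ x : ℝ, (u x).det = u x 0 0 * u x 1 1 - u x 0 1 * u x 1 0 := fun x =>
    Matrix.det_fin_two _
  simp only [e]
  have h1 := (((hasDerivAt_entry h 0 0).mul (hasDerivAt_entry h 1 1)).sub
    ((hasDerivAt_entry h 0 1).mul (hasDerivAt_entry h 1 0)))
  convert h1 using 1
  · rfl
  · rfl
  simp [Matrix.det_fin_two, Matrix.trace_fin_two, Matrix.mul_apply, Fin.sum_univ_two]
  ring

private lemma adjugate_eq' (B : E) : B.adjugate = B.trace • (1:E) - B := by
  ext i j
  fin_cases i <;> fin_cases j <;>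
    simp [Matrix.adjugate_fin_two, Matrix.trace_fin_two, Matrix.one_apply]

private lemma adj_mul_key (u B : E) : (u * B).adjugate = B.trace • u.adjugate - B * u.adjugate := by
  rw [Matrix.adjugate_mul_distrib, adjugate_eq' B, sub_mul, Matrix.smul_mul, Matrix.one_mul]

private lemma hasDerivAt_adjugate {u : ℝ → E} {u' : E} {t : ℝ} (h : HasDerivAt u u' t) :
    HasDerivAt (fun x => (u x).adjugate) u'.adjugate t := by
  apply hasDerivAt_of_entries
  intro i j
  fin_cases i <;> fin_cases j <;>
    simp only [Matrix.adjugate_fin_two, Matrix.cons_val_zero, Matrix.cons_val_one,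
      Matrix.head_cons, Matrix.head_fin_const, Matrix.cons_val', Matrix.empty_val',
      Matrix.cons_val_fin_one]
  · exact hasDerivAt_entry h 1 1
  · exact (hasDerivAt_entry h 0 1).neg
  · exact (hasDerivAt_entry h 1 0).neg
  · exact hasDerivAt_entry h 0 0

private lemma hasDerivAt_inv_matrix {u : ℝ → E} {B : E} {t : ℝ} (h : HasDerivAt u (u t * B) t)
    (hd : (u t).det ≠ 0) :
    HasDerivAt (fun x => (u x)⁻¹) (-(B * (u t)⁻¹)) t := by
  have e : ∀ x : ℝ, (u x)⁻¹ = ((u x).det)⁻¹ • (u x).adjugate := by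
    intro x; rw [Matrix.inv_def, Ring.inverse_eq_inv']
  simp only [e]
  have hdet := hasDerivAt_det' h
  have hdinv := (hasDerivAt_const t (1:ℂ)).div hdet hd
  have hadj := hasDerivAt_adjugate h
  have := hdinv.smul hadj
  simp only [Pi.div_apply] at this
  convert this using 1
  · rfl
  · rfl
  · rfl
  · funext x; simp [one_div]
  rw [adj_mul_key, mul_smul_comm]
  set d := (u t).det
  set tr := B.trace
  set adjU := (u t).adjugate
  rw [smul_sub, smul_smul]
  match_scalars <;> field_simp <;> ring

private lemma det_ode_ne_zero {g τ : ℝ → ℂ} (hτ : Continuous τ) (hg0 : g 0 = 1)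
    (hg : ∀ t ∈ Set.Icc (0:ℝ) 1, HasDerivAt g (g t * τ t) t) :
    ∀ x ∈ Set.Icc (0:ℝ) 1, g x ≠ 0 := by
  intro x hx
  set Ef : ℝ → ℂ := fun t => Complex.exp (-(∫ u in (0:ℝ)..t, τ u)) with hEf
  have hI : ∀ t : ℝ, HasDerivAt (fun t => ∫ u in (0:ℝ)..t, τ u) (τ t) t := fun t =>
    (intervalIntegral.integral_hasDerivAt_right (hτ.intervalIntegrable _ _)
      (hτ.stronglyMeasurableAtFilter _ _) hτ.continuousAt)
  have hE : ∀ t : ℝ, HasDerivAt Ef (-τ t * Ef t) t := by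
    intro t
    have := ((hI t).neg).cexp
    convert this using 1
    · rfl
    simp only [hEf, Pi.neg_apply]
    ring
  have hh : ∀ t ∈ Set.Icc (0:ℝ) 1, HasDerivAt (fun t => g t * Ef t) 0 t := by
    intro t ht
    have := (hg t ht).mul (hE t)
    convert this using 1
    · rfl
    · rfl
    ring
  have key : g x * Ef x = 1 := by
    have hsub : Set.uIcc (0:ℝ) x ⊆ Set.Icc 0 1 := by
      rw [Set.uIcc_of_le hx.1]
      exact Set.Icc_subset_Icc le_rfl hx.2
    have := intervalIntegral.integral_eq_sub_of_hasDerivAt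
      (f := fun t => g t * Ef t) (f' := fun _ => (0:ℂ)) (a := 0) (b := x)
      (fun t ht => hh t (hsub ht)) (intervalIntegrable_const)
    simp only [intervalIntegral.integral_zero] at this
    have h0 : g 0 * Ef 0 = 1 := by rw [hg0, hEf]; simp
    have := this.symm
    rw [sub_eq_zero] at this
    rw [this, h0]
  intro hzero
  rw [hzero, zero_mul] at key
  exact zero_ne_one key

private noncomputable instance instENormedAddMonoidMat : ENormedAddMonoid E :=
  inferInstanceAs (ENormedAddMonoid (Fin 2 → Fin 2 → ℂ))

set_option maxHeartbeats 1000000 in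
/-- the derivative at `s = 0` of the holonomy of the deformed connection
`A + s·W` equals `(∫₀¹ y₀(x)·W(x)·y₀(x)⁻¹ dx)·y₀(1)`. -/
theorem deriv_of_holonomy_under_deformation
    (A W : ℝ → Matrix (Fin 2) (Fin 2) ℂ) (hA : Continuous A) (hW : Continuous W)
    (y : ℝ → ℝ → Matrix (Fin 2) (Fin 2) ℂ)
    (hy0 : ∀ s : ℝ, y s 0 = 1)
    (hy : ∀ s : ℝ, ∀ t ∈ Set.Icc (0 : ℝ) 1,
      HasDerivAt (y s) (y s t * (A t + s • W t)) t) :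
    (∀ x ∈ Set.Icc (0 : ℝ) 1, IsUnit (y 0 x)) ∧
      HasDerivAt (fun s : ℝ => y s 1)
        ((∫ x in (0 : ℝ)..1, y 0 x * W x * (y 0 x)⁻¹) * y 0 1) 0 := by
  have hu : ∀ t ∈ Set.Icc (0:ℝ) 1, HasDerivAt (y 0) (y 0 t * A t) t := by
    intro t ht
    simpa using hy 0 t ht
  -- determinant never vanishes on [0,1]
  have hdet : ∀ x ∈ Set.Icc (0:ℝ) 1, (y 0 x).det ≠ 0 := by
    apply det_ode_ne_zero (hA.matrix_trace)
    · rw [hy0]; simp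
    · intro t ht
      exact hasDerivAt_det' (hu t ht)
  have hunit : ∀ x ∈ Set.Icc (0:ℝ) 1, IsUnit (y 0 x) := by
    intro x hx
    rw [Matrix.isUnit_iff_isUnit_det]
    exact (hdet x hx).isUnit
  refine ⟨hunit, ?_⟩
  classical
  -- the inverse of the unperturbed solution
  set v : ℝ → E := fun x => (y 0 x)⁻¹ with hv_def
  have hv : ∀ t ∈ Set.Icc (0:ℝ) 1, HasDerivAt v (-(A t * v t)) t := fun t ht =>
    hasDerivAt_inv_matrix (hu t ht) (hdet t ht)
  have hvy : ∀ x ∈ Set.Icc (0:ℝ) 1, v x * y 0 x = 1 := fun x hx =>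
    Matrix.nonsing_inv_mul _ ((Matrix.isUnit_iff_isUnit_det _).1 (hunit x hx))
  -- continuity
  have hconty : ∀ s : ℝ, ContinuousOn (y s) (Set.Icc (0:ℝ) 1) := fun s x hx =>
    (hy s x hx).continuousAt.continuousWithinAt
  have hcontv : ContinuousOn v (Set.Icc (0:ℝ) 1) := fun x hx =>
    (hv x hx).continuousAt.continuousWithinAt
  -- bounds on A, W, v over [0,1]
  obtain ⟨LA₀, hLA₀⟩ := isCompact_Icc.exists_bound_of_continuousOn
    (hA.continuousOn : ContinuousOn A (Set.Icc (0:ℝ) 1))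
  obtain ⟨LW₀, hLW₀⟩ := isCompact_Icc.exists_bound_of_continuousOn
    (hW.continuousOn : ContinuousOn W (Set.Icc (0:ℝ) 1))
  obtain ⟨Lv₀, hLv₀⟩ := isCompact_Icc.exists_bound_of_continuousOn hcontv
  set LA := max LA₀ 0 with hLA_def
  set LW := max LW₀ 0 with hLW_def
  set Lv := max Lv₀ 0 with hLv_def
  have hLA : ∀ t ∈ Set.Icc (0:ℝ) 1, ‖A t‖ ≤ LA := fun t ht => (hLA₀ t ht).trans (le_max_left _ _)
  have hLW : ∀ t ∈ Set.Icc (0:ℝ) 1, ‖W t‖ ≤ LW := fun t ht => (hLW₀ t ht).trans (le_max_left _ _)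
  have hLv : ∀ t ∈ Set.Icc (0:ℝ) 1, ‖v t‖ ≤ Lv := fun t ht => (hLv₀ t ht).trans (le_max_left _ _)
  have hLA0 : (0:ℝ) ≤ LA := le_max_right _ _
  have hLW0 : (0:ℝ) ≤ LW := le_max_right _ _
  have hLv0 : (0:ℝ) ≤ Lv := le_max_right _ _
  -- a priori bound on y s
  set K : ℝ := 2 * (LA + LW) with hK_def
  have hK0 : (0:ℝ) ≤ K := by positivity
  set M : ℝ := ‖(1:E)‖ * Real.exp K with hM_def
  have hM0 : (0:ℝ) ≤ M := by positivity
  have hapriori : ∀ s : ℝ, |s| ≤ 1 → ∀ t ∈ Set.Icc (0:ℝ) 1, ‖y s t‖ ≤ M := by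
    intro s hs t ht
    have hgr := norm_le_gronwallBound_of_norm_deriv_right_le (a := 0) (b := 1)
      (f := y s) (f' := fun t => y s t * (A t + s • W t)) (δ := ‖(1:E)‖) (K := K) (ε := 0)
      (hconty s)
      (fun x hx => (hy s x (Set.Ico_subset_Icc_self hx)).hasDerivWithinAt)
      (by rw [hy0]) ?_ t ht
    · rw [gronwallBound_ε0] at hgr
      refine hgr.trans ?_
      rw [hM_def]
      have : K * (t - 0) ≤ K := by nlinarith [ht.1, ht.2]
      exact mul_le_mul_of_nonneg_left (Real.exp_le_exp.2 this) (norm_nonneg _)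
    · intro x hx
      have hx' := Set.Ico_subset_Icc_self hx
      have h1 : ‖y s x * (A x + s • W x)‖ ≤ 2 * ‖y s x‖ * ‖A x + s • W x‖ := norm_matMul_le _ _
      have h2 : ‖A x + s • W x‖ ≤ LA + LW := by
        refine (norm_add_le _ _).trans ?_
        have : ‖s • W x‖ = |s| * ‖W x‖ := by rw [norm_smul, Real.norm_eq_abs]
        rw [this]
        have := hLW x hx'
        have := hLA x hx'
        nlinarith [norm_nonneg (W x), abs_nonneg s]
      calc ‖y s x * (A x + s • W x)‖ ≤ 2 * ‖y s x‖ * (LA + LW) := by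
            refine h1.trans ?_
            have := norm_nonneg (y s x)
            nlinarith [norm_nonneg (A x + s • W x)]
      _ = K * ‖y s x‖ + 0 := by rw [hK_def]; ring
  -- difference bound
  set K2 : ℝ := 2 * LA + 1 with hK2_def
  have hK21 : (1:ℝ) ≤ K2 := by nlinarith
  have hK20 : (0:ℝ) < K2 := by linarith
  set C : ℝ := 2 * M * LW * Real.exp K2 with hC_def
  have hC0 : (0:ℝ) ≤ C := by positivity
  have hdiff : ∀ s : ℝ, |s| ≤ 1 → ∀ t ∈ Set.Icc (0:ℝ) 1, ‖y s t - y 0 t‖ ≤ |s| * C := by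
    intro s hs t ht
    set eps : ℝ := |s| * (2 * M * LW) with heps_def
    have heps0 : (0:ℝ) ≤ eps := by positivity
    have hgr := norm_le_gronwallBound_of_norm_deriv_right_le (a := 0) (b := 1)
      (f := fun t => y s t - y 0 t)
      (f' := fun t => y s t * (A t + s • W t) - y 0 t * A t)
      (δ := 0) (K := K2) (ε := eps)
      ((hconty s).sub (hconty 0))
      (fun x hx => ((hy s x (Set.Ico_subset_Icc_self hx)).sub
        (hu x (Set.Ico_subset_Icc_self hx))).hasDerivWithinAt)
      (by show ‖y s 0 - y 0 0‖ ≤ 0; rw [hy0 s, hy0 0, sub_self, norm_zero]) ?_ t ht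
    · rw [gronwallBound_of_K_ne_0 (ne_of_gt hK20)] at hgr
      refine hgr.trans ?_
      have h1 : Real.exp (K2 * (t - 0)) - 1 ≤ Real.exp K2 := by
        have : K2 * (t - 0) ≤ K2 := by nlinarith [ht.1, ht.2]
        nlinarith [Real.exp_le_exp.2 this, Real.exp_pos K2]
      have h2 : eps / K2 ≤ eps := div_le_self heps0 hK21
      have h0 : (0:ℝ) ≤ Real.exp (K2 * (t - 0)) - 1 := by
        have : (0:ℝ) ≤ K2 * (t - 0) := by nlinarith [ht.1]
        nlinarith [Real.one_le_exp this]
      have hd := div_nonneg heps0 hK20.le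
      calc (0:ℝ) * Real.exp (K2 * (t - 0)) + eps / K2 * (Real.exp (K2 * (t - 0)) - 1)
          = eps / K2 * (Real.exp (K2 * (t - 0)) - 1) := by ring
      _ ≤ eps * Real.exp K2 := mul_le_mul h2 h1 h0 heps0
      _ = |s| * C := by rw [hC_def, heps_def]; ring
    · intro x hx
      have hx' := Set.Ico_subset_Icc_self hx
      show ‖y s x * (A x + s • W x) - y 0 x * A x‖ ≤ K2 * ‖y s x - y 0 x‖ + eps
      have hfe : y s x * (A x + s • W x) - y 0 x * A x
          = (y s x - y 0 x) * A x + s • (y s x * W x) := by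
        rw [mul_add, sub_mul, mul_smul_comm]
        abel
      rw [hfe]
      refine (norm_add_le _ _).trans ?_
      have h1 : ‖(y s x - y 0 x) * A x‖ ≤ 2 * ‖y s x - y 0 x‖ * LA := by
        refine (norm_matMul_le _ _).trans ?_
        have := hLA x hx'
        have := norm_nonneg (y s x - y 0 x)
        nlinarith [norm_nonneg (A x)]
      have h2 : ‖s • (y s x * W x)‖ ≤ eps := by
        rw [norm_smul, Real.norm_eq_abs, heps_def]
        have hyb := hapriori s hs x hx'
        have hWb := hLW x hx'
        have h3 : ‖y s x * W x‖ ≤ 2 * M * LW := by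
          refine (norm_matMul_le _ _).trans ?_
          have := norm_nonneg (y s x)
          have := norm_nonneg (W x)
          nlinarith
        have := abs_nonneg s
        nlinarith
      have : 2 * ‖y s x - y 0 x‖ * LA ≤ K2 * ‖y s x - y 0 x‖ := by
        rw [hK2_def]
        nlinarith [norm_nonneg (y s x - y 0 x)]
      linarith
  -- integrability
  have huIcc : Set.uIcc (0:ℝ) 1 = Set.Icc 0 1 := Set.uIcc_of_le zero_le_one
  have hcmul : ∀ s : ℝ, ContinuousOn (fun x => y s x * W x * v x) (Set.Icc (0:ℝ) 1) := fun s =>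
    ContinuousOn.matMul (ContinuousOn.matMul (hconty s) hW.continuousOn) hcontv
  have hint : ∀ s : ℝ, IntervalIntegrable (fun x => y s x * W x * v x)
      MeasureTheory.volume 0 1 := fun s =>
    ContinuousOn.intervalIntegrable (by rw [huIcc]; exact hcmul s)
  set G : ℝ → E := fun s => ∫ x in (0:ℝ)..1, y s x * W x * v x with hG_def
  -- the key integral identity
  have key : ∀ s : ℝ, y s 1 = y 0 1 + s • (G s * y 0 1) := by
    intro s
    have hF : ∀ t ∈ Set.uIcc (0:ℝ) 1,
        HasDerivAt (fun t => y s t * v t) (s • (y s t * W t * v t)) t := by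
      rw [huIcc]
      intro t ht
      have h1 := HasDerivAt.matMul (hy s t ht) (hv t ht)
      convert h1 using 1
      simp only [mul_add, add_mul, mul_neg, neg_mul, mul_smul_comm, smul_mul_assoc,
        mul_assoc, neg_smul, one_smul]
      abel
    have hIint : IntervalIntegrable (fun t => s • (y s t * W t * v t))
        MeasureTheory.volume 0 1 := (hint s).smul s
    have heq := intervalIntegral.integral_eq_sub_of_hasDerivAt hF hIint
    rw [intervalIntegral.integral_smul] at heq
    have hv0 : v 0 = 1 := by rw [hv_def]; simp [hy0 0]
    have h10 : y s 0 * v 0 = 1 := by rw [hy0 s, hv0, one_mul]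
    rw [h10] at heq
    have heq' : y s 1 * v 1 = 1 + s • G s := by
      have h2 : s • G s = y s 1 * v 1 - 1 := heq
      rw [h2]; abel
    have h1mem : (1:ℝ) ∈ Set.Icc (0:ℝ) 1 := by constructor <;> norm_num
    calc y s 1 = y s 1 * (v 1 * y 0 1) := by rw [hvy 1 h1mem, mul_one]
    _ = (y s 1 * v 1) * y 0 1 := by rw [mul_assoc]
    _ = (1 + s • G s) * y 0 1 := by rw [heq']
    _ = y 0 1 + s • (G s * y 0 1) := by rw [add_mul, one_mul, smul_mul_assoc]
  -- continuity of G at 0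
  set C2 : ℝ := 4 * C * LW * Lv with hC2_def
  have hC20 : (0:ℝ) ≤ C2 := by positivity
  have hGdiff : ∀ s : ℝ, |s| ≤ 1 → ‖G s - G 0‖ ≤ |s| * C2 := by
    intro s hs
    have hGsub : G s - G 0 = ∫ x in (0:ℝ)..1,
        (y s x * W x * v x - y 0 x * W x * v x) := by
      rw [hG_def, intervalIntegral.integral_sub (hint s) (hint 0)]
    rw [hGsub]
    have hb := intervalIntegral.norm_integral_le_of_norm_le_const
      (C := |s| * C2) (a := (0:ℝ)) (b := 1)
      (f := fun x => y s x * W x * v x - y 0 x * W x * v x) ?_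
    · simpa using hb
    · intro x hx
      have hx' : x ∈ Set.Icc (0:ℝ) 1 := by
        rw [Set.uIoc_of_le zero_le_one] at hx
        exact ⟨hx.1.le, hx.2⟩
      show ‖y s x * W x * v x - y 0 x * W x * v x‖ ≤ |s| * C2
      have he : y s x * W x * v x - y 0 x * W x * v x = ((y s x - y 0 x) * W x) * v x := by
        rw [sub_mul, sub_mul]
      rw [he]
      have h1 : ‖(y s x - y 0 x) * W x‖ ≤ 2 * (|s| * C) * LW := by
        refine (norm_matMul_le _ _).trans ?_
        have := hdiff s hs x hx'
        have := hLW x hx'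
        have := norm_nonneg (y s x - y 0 x)
        have := norm_nonneg (W x)
        nlinarith [abs_nonneg s]
      refine (norm_matMul_le _ _).trans ?_
      have h2 := hLv x hx'
      have h3 := norm_nonneg ((y s x - y 0 x) * W x)
      have h4 := norm_nonneg (v x)
      have h5 : (0:ℝ) ≤ 2 * (|s| * C) * LW := by positivity
      calc 2 * ‖(y s x - y 0 x) * W x‖ * ‖v x‖ ≤ 2 * (2 * (|s| * C) * LW) * Lv := by
            nlinarith
      _ = |s| * C2 := by rw [hC2_def]; ring
  -- conclude
  show HasDerivAt (fun s : ℝ => y s 1) (G 0 * y 0 1) 0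
  erw [hasDerivAt_iff_tendsto_slope]
  have hslope : ∀ᶠ s in nhdsWithin (0:ℝ) {(0:ℝ)}ᶜ,
      slope (fun s : ℝ => y s 1) 0 s = G s * y 0 1 := by
    filter_upwards [self_mem_nhdsWithin] with s hs
    have hs' : s ≠ 0 := hs
    rw [slope_def_module, key s]
    rw [sub_zero]
    have : y 0 1 + s • (G s * y 0 1) - y 0 1 = s • (G s * y 0 1) := by abel
    rw [this, smul_smul, inv_mul_cancel₀ hs', one_smul]
  rw [Filter.tendsto_congr' hslope]
  apply Filter.Tendsto.mono_left _ nhdsWithin_le_nhds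
  rw [← tendsto_sub_nhds_zero_iff]
  have hsmall : ∀ᶠ s : ℝ in nhds 0, |s| ≤ 1 := by
    filter_upwards [Metric.ball_mem_nhds (0:ℝ) one_pos] with s hs
    rw [Metric.mem_ball, Real.dist_eq, sub_zero] at hs
    exact hs.le
  apply squeeze_zero_norm' (a := fun s : ℝ => (2 * C2 * ‖y 0 1‖) * |s|)
  · filter_upwards [hsmall] with s hs1
    have he : G s * y 0 1 - G 0 * y 0 1 = (G s - G 0) * y 0 1 := by rw [sub_mul]
    rw [he]
    refine (norm_matMul_le _ _).trans ?_
    have h1 := hGdiff s hs1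
    have h2 := norm_nonneg (y 0 1)
    have h3 := norm_nonneg (G s - G 0)
    nlinarith [abs_nonneg s]
  · have : Filter.Tendsto (fun s : ℝ => (2 * C2 * ‖y 0 1‖) * |s|) (nhds 0) (nhds ((2 * C2 * ‖y 0 1‖) * |(0:ℝ)|)) :=
      tendsto_const_nhds.mul (continuous_abs.tendsto (0:ℝ))
    simpa using this
end
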